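/- Let each f_i be L-smooth and μ-strongly convex (0 < μ ≤ L), let x⋆ be the unique minimizer of f and b² = (1/n)∑_{i=1}^n ‖∇f_i(x⋆)‖². Let 0 < γ ≤ μ(1−λ₂)/(6L²). If X_L ∈ ℝ^{n×d} is a fixed point of the full-batch DecentLaM recursion, i.e. (I−W)X_L = −γ W ∇f(X_L), then ∑_{i=1}^n ‖row_i(X_L) − x⋆‖² ≤ 4n(1 + 2L/μ)² γ² b² / (1−ρ)²; in particular the bound is independent of the momentum parameter β. -/

import Mathlib

open Finset
open scoped RealInnerProductSpace

noncomputable section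

lemma pilp_sum_apply {ι : Type*} (s : Finset ι) {m : ℕ} (f : ι → EuclideanSpace ℝ (Fin m)) (k : Fin m) :
    (∑ j ∈ s, f j) k = ∑ j ∈ s, f j k := by
  induction s using Finset.cons_induction with
  | empty => rfl
  | cons a s ha ih => rw [Finset.sum_cons, Finset.sum_cons, PiLp.add_apply, ih]

lemma eucl_norm_sq {m : ℕ} (x : EuclideanSpace ℝ (Fin m)) : ‖x‖^2 = ∑ i, (x i)^2 := by
  rw [EuclideanSpace.norm_eq, Real.sq_sqrt (by positivity)]
  simp [Real.norm_eq_abs, sq_abs]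

lemma repr_mulVec {n : ℕ} {W : Matrix (Fin n) (Fin n) ℝ} (hW : W.IsHermitian)
    (v : EuclideanSpace ℝ (Fin n)) (i : Fin n) :
    hW.eigenvectorBasis.repr (WithLp.toLp 2 (W.mulVec v)) i
      = hW.eigenvalues i * hW.eigenvectorBasis.repr v i := by
  rw [OrthonormalBasis.repr_apply_apply, OrthonormalBasis.repr_apply_apply]
  have hWt : W.transpose = W := by
    ext a b
    simpa using congrFun (congrFun hW.eq a) b
  have h1 : (inner ℝ (hW.eigenvectorBasis i) ((WithLp.toLp 2 (W.mulVec v) : EuclideanSpace ℝ (Fin n))) : ℝ)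
      = dotProduct (fun j => hW.eigenvectorBasis i j) (W.mulVec v) := by
    simp [PiLp.inner_apply, dotProduct, RCLike.inner_apply, mul_comm]
  rw [h1, Matrix.dotProduct_mulVec, ← Matrix.mulVec_transpose, hWt]
  have h2 : W.mulVec (fun j => hW.eigenvectorBasis i j)
      = hW.eigenvalues i • (fun j => hW.eigenvectorBasis i j) := hW.mulVec_eigenvectorBasis i
  rw [h2]
  simp [dotProduct, PiLp.inner_apply, Finset.mul_sum, mul_assoc, mul_comm, mul_left_comm]

lemma parseval {n : ℕ} {W : Matrix (Fin n) (Fin n) ℝ} (hW : W.IsHermitian)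
    (v w : EuclideanSpace ℝ (Fin n)) :
    ⟪v, w⟫ = ∑ i, hW.eigenvectorBasis.repr v i * hW.eigenvectorBasis.repr w i := by
  rw [← LinearIsometryEquiv.inner_map_map hW.eigenvectorBasis.repr v w]
  simp only [PiLp.inner_apply, RCLike.inner_apply, starRingEnd_apply, star_trivial]
  exact Finset.sum_congr rfl fun _ _ => mul_comm _ _

lemma spec_norm_le {n : ℕ} {W : Matrix (Fin n) (Fin n) ℝ} (hW : W.IsHermitian)
    (habs : ∀ i, |hW.eigenvalues i| ≤ 1) (v wv : EuclideanSpace ℝ (Fin n))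
    (hwv : wv = WithLp.toLp 2 (W.mulVec v)) :
    ‖wv‖ ≤ ‖v‖ := by
  have h1 : ‖wv‖^2 ≤ ‖v‖^2 := by
    rw [← real_inner_self_eq_norm_sq, ← real_inner_self_eq_norm_sq,
      parseval hW, parseval hW]
    refine Finset.sum_le_sum fun i _ => ?_
    rw [hwv, repr_mulVec hW]
    have h := abs_le.1 (habs i)
    nlinarith [mul_nonneg (mul_nonneg (sub_nonneg.2 h.2)
      (by linarith [h.1] : (0:ℝ) ≤ 1 + hW.eigenvalues i))
      (mul_self_nonneg (hW.eigenvectorBasis.repr v i))]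
  exact le_of_pow_le_pow_left₀ two_ne_zero (norm_nonneg v) h1

lemma spec_quad {n : ℕ} {W : Matrix (Fin n) (Fin n) ℝ} (hW : W.IsHermitian)
    (hn0 : 0 < n)
    (i0 : Fin n) (hi0 : hW.eigenvalues i0 = 1)
    (lam1 : ℝ) (hl : lam1 < 1) (hother : ∀ i, i ≠ i0 → hW.eigenvalues i ≤ lam1)
    (hones : W.mulVec (fun _ => (1:ℝ)) = (fun _ => 1))
    (v wv : EuclideanSpace ℝ (Fin n)) (hwv : wv = WithLp.toLp 2 (W.mulVec v)) (hv : ∑ i, v i = 0) :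
    ⟪v, wv⟫ ≤ lam1 * ‖v‖^2 := by
  subst hwv
  set B := hW.eigenvectorBasis with hB
  set ones : EuclideanSpace ℝ (Fin n) := WithLp.toLp 2 (fun _ => 1) with hones'
  have hd : ∀ i, i ≠ i0 → B.repr ones i = 0 := by
    intro i hi
    have h := repr_mulVec hW ones i
    rw [show WithLp.toLp 2 (W.mulVec ones) = ones from congrArg (WithLp.toLp 2) hones] at h
    have h' : B.repr ones i * (1 - hW.eigenvalues i) = 0 := by linear_combination h
    rcases mul_eq_zero.1 h' with h2 | h2
    · exact h2
    · exact absurd h2 (by have := hother i hi; intro hc; linarith)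
  have hones_inner : (⟪ones, v⟫ : ℝ) = 0 := by
    simpa [PiLp.inner_apply, hones'] using hv
  have hpar := parseval hW ones v
  rw [hones_inner] at hpar
  have hsingle : ∑ i, B.repr ones i * B.repr v i = B.repr ones i0 * B.repr v i0 :=
    Finset.sum_eq_single i0 (fun b _ hb => by rw [hd b hb, zero_mul])
      (fun h => absurd (Finset.mem_univ i0) h)
  have hono : B.repr ones i0 ≠ 0 := by
    intro hz
    have h2 : (⟪ones, ones⟫ : ℝ) = 0 := by
      rw [parseval hW]
      refine Finset.sum_eq_zero fun i _ => ?_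
      rcases eq_or_ne i i0 with h | hi
      · rw [h, hz, mul_zero]
      · rw [hd i hi, zero_mul]
    have h3 : (⟪ones, ones⟫ : ℝ) = n := by
      simp [PiLp.inner_apply, RCLike.inner_apply, hones']
      rw [eucl_norm_sq]; simp
    rw [h3] at h2
    exact absurd h2 (by positivity)
  have hv0 : B.repr v i0 = 0 := by
    rcases mul_eq_zero.1 (hsingle.symm.trans hpar.symm) with h | h
    · exact absurd h hono
    · exact h
  have hnv : ‖v‖^2 = ∑ i, B.repr v i * B.repr v i := by
    rw [← real_inner_self_eq_norm_sq, parseval hW]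
  rw [parseval hW, hnv, Finset.mul_sum]
  refine Finset.sum_le_sum fun i _ => ?_
  rw [repr_mulVec hW]
  rcases eq_or_ne i i0 with h | hi
  · rw [h, hv0]; ring_nf; exact le_refl 0
  · have h := hother i hi
    nlinarith [mul_self_nonneg (B.repr v i)]

lemma l2_triangle {n : ℕ} (a b : Fin n → ℝ) (ha : ∀ i, 0 ≤ a i) (hb : ∀ i, 0 ≤ b i) :
    Real.sqrt (∑ i, (a i + b i)^2)
      ≤ Real.sqrt (∑ i, (a i)^2) + Real.sqrt (∑ i, (b i)^2) := by
  set A := Real.sqrt (∑ i, (a i)^2) with hA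
  set Bq := Real.sqrt (∑ i, (b i)^2) with hBq
  have hA0 : 0 ≤ A := Real.sqrt_nonneg _
  have hB0 : 0 ≤ Bq := Real.sqrt_nonneg _
  have hA2 : A^2 = ∑ i, (a i)^2 := Real.sq_sqrt (by positivity)
  have hB2 : Bq^2 = ∑ i, (b i)^2 := Real.sq_sqrt (by positivity)
  have hcs : ∑ i, a i * b i ≤ A * Bq := by
    have h := Finset.sum_mul_sq_le_sq_mul_sq Finset.univ a b
    have h0 : 0 ≤ ∑ i, a i * b i := Finset.sum_nonneg fun i _ => mul_nonneg (ha i) (hb i)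
    nlinarith [mul_nonneg hA0 hB0]
  have hle : ∑ i, (a i + b i)^2 ≤ (A + Bq)^2 := by
    have hexp : ∑ i, (a i + b i)^2
        = (∑ i, (a i)^2) + ((∑ i, 2*(a i * b i)) + ∑ i, (b i)^2) := by
      rw [← Finset.sum_add_distrib, ← Finset.sum_add_distrib]
      exact Finset.sum_congr rfl fun i _ => by ring
    have h2 : ∑ i, 2*(a i * b i) = 2 * ∑ i, a i * b i := by
      rw [Finset.mul_sum]
    rw [hexp, h2]
    nlinarith
  calc Real.sqrt (∑ i, (a i + b i)^2) ≤ Real.sqrt ((A + Bq)^2) := Real.sqrt_le_sqrt hle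
    _ = A + Bq := Real.sqrt_sq (by linarith)


set_option maxHeartbeats 2000000 in
lemma final_algebra (L μ γ σ t C D E sqn Bb Gn : ℝ)
    (hL : 0 < L) (hμ : 0 < μ) (hμL : μ ≤ L) (hγ0 : 0 < γ) (hσ : 0 < σ)
    (hC0 : 0 ≤ C) (hD0 : 0 ≤ D) (hBb0 : 0 ≤ Bb) (hGn0 : 0 ≤ Gn) (hE0 : 0 ≤ E)
    (hsqn0 : 0 < sqn) (ht0 : 0 < t) (htσ : t ≤ σ)
    (h6L : 6*L^2*γ ≤ μ*σ)
    (hcons : σ * C ≤ γ * Gn)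
    (hGnb : Gn ≤ L * D + Bb)
    (hEb : μ * (sqn * E) ≤ L * C)
    (hDb : D ≤ C + sqn * E) :
    D^2 * (μ^2 * t^2) ≤ 4*(μ+2*L)^2*γ^2*Bb^2 := by
  have hμD : μ * D ≤ (μ + L) * C := by
    nlinarith [mul_le_mul_of_nonneg_left hDb hμ.le, hEb]
  have hGnb2 : σ * C ≤ γ*L*D + γ*Bb := by
    calc σ*C ≤ γ*Gn := hcons
      _ ≤ γ*(L*D + Bb) := mul_le_mul_of_nonneg_left hGnb hγ0.le
      _ = γ*L*D + γ*Bb := by ring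
  have h2σC : 2*(σ*C) ≤ 3*(γ*Bb) := by
    have h1 : μ*(σ*C) ≤ μ*(γ*L*D + γ*Bb) := mul_le_mul_of_nonneg_left hGnb2 hμ.le
    have h2 : γ*L*(μ*D) ≤ γ*L*((μ+L)*C) :=
      mul_le_mul_of_nonneg_left hμD (by positivity)
    have h4 : 3*(L*(μ+L)) ≤ 6*L^2 := by nlinarith
    have h3 : 3*(γ*L*((μ+L)*C)) ≤ (μ*σ)*C := by
      nlinarith [mul_le_mul_of_nonneg_right (mul_le_mul_of_nonneg_right h4 hγ0.le) hC0,
        mul_le_mul_of_nonneg_right h6L hC0]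
    nlinarith [h1, h2, h3, hμ]
  have h2σD : 2*(μ*(σ*D)) ≤ 3*((μ+L)*(γ*Bb)) := by
    nlinarith [mul_le_mul_of_nonneg_left hμD (by positivity : (0:ℝ) ≤ 2*σ),
      mul_le_mul_of_nonneg_left h2σC (by positivity : (0:ℝ) ≤ μ + L)]
  have hsqr : (2*(μ*(σ*D)))^2 ≤ (3*((μ+L)*(γ*Bb)))^2 :=
    pow_le_pow_left₀ (by positivity) h2σD 2
  have htt : t^2 ≤ σ^2 := pow_le_pow_left₀ ht0.le htσ 2
  have e1 : 0 ≤ μ^2*D^2*(σ^2 - t^2) := mul_nonneg (by positivity) (by linarith)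
  have e2 : 0 ≤ (16*(μ+2*L)^2 - 9*(μ+L)^2) * (γ^2*Bb^2) :=
    mul_nonneg (by nlinarith) (by positivity)
  nlinarith [hsqr, e1, e2]

set_option maxHeartbeats 2000000 in
/-- **Inconsistency bias of DecentLaM (Proposition 3).**
Each `fi i` is `L`-smooth and `μ`-strongly convex, `xstar` is the (unique) minimizer of
`f = (1/n) ∑ fi i`, and `b² = (1/n) ∑ ‖∇fi i (xstar)‖²`.  `W` is a symmetric weight matrix
with nonnegative entries and row sums `1`, whose eigenvalues (with multiplicity) are
enumerated in decreasing order by `lam`, with `lam 0 = 1 > lam 1` and all eigenvalues `> -1`;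
`ρ = max {|λ₂|, |λ_n|}`.  If `0 < γ ≤ μ(1-λ₂)/(6L²)` and `XL` is a fixed point of the
full-batch DecentLaM recursion, i.e. `(I-W)XL = -γ W ∇f(XL)` (rowwise), then
`∑ i ‖row_i(XL) - xstar‖² ≤ 4 n (1 + 2L/μ)² γ² b² / (1-ρ)²`; in particular the bound
does not involve any momentum parameter `β`. -/
theorem decentlam_inconsistency_bias
    {n d : ℕ} (hn : 1 < n)
    (fi : Fin n → EuclideanSpace ℝ (Fin d) → ℝ)
    (g : Fin n → EuclideanSpace ℝ (Fin d) → EuclideanSpace ℝ (Fin d))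
    (hgrad : ∀ i x, HasGradientAt (fi i) (g i x) x)
    (L μ : ℝ) (hL : 0 < L) (hμ : 0 < μ) (hμL : μ ≤ L)
    (hsmooth : ∀ i x y, ‖g i x - g i y‖ ≤ L * ‖x - y‖)
    (hsc : ∀ i x y, μ * ‖x - y‖ ^ 2 ≤ ⟪g i x - g i y, x - y⟫)
    (xstar : EuclideanSpace ℝ (Fin d))
    (hxstar : ∀ x, (n : ℝ)⁻¹ * ∑ i, fi i xstar ≤ (n : ℝ)⁻¹ * ∑ i, fi i x)
    (W : Matrix (Fin n) (Fin n) ℝ)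
    (hW : W.IsHermitian)
    (hWnn : ∀ i j, 0 ≤ W i j)
    (hW1 : ∀ i, ∑ j, W i j = 1)
    (lam : Fin n → ℝ) (e : Fin n ≃ Fin n)
    (hlam : ∀ i, lam i = hW.eigenvalues (e i))
    (hanti : Antitone lam)
    (hlam1 : lam ⟨0, by omega⟩ = 1)
    (hgap : lam ⟨1, hn⟩ < 1)
    (hlow : ∀ i, -1 < lam i)
    (ρ : ℝ) (hρ : ρ = max |lam ⟨1, hn⟩| |lam ⟨n - 1, by omega⟩|)
    (γ : ℝ) (hγ0 : 0 < γ) (hγ : γ ≤ μ * (1 - lam ⟨1, hn⟩) / (6 * L ^ 2))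
    (XL : Fin n → EuclideanSpace ℝ (Fin d))
    (hfix : ∀ i, (XL i - ∑ j, W i j • XL j) = (-γ) • ∑ j, W i j • g j (XL j)) :
    ∑ i, ‖XL i - xstar‖ ^ 2
      ≤ 4 * n * (1 + 2 * L / μ) ^ 2 * γ ^ 2 * ((n : ℝ)⁻¹ * ∑ i, ‖g i xstar‖ ^ 2)
        / (1 - ρ) ^ 2 := by
  have hn0 : (0:ℝ) < n := by exact_mod_cast (by omega : 0 < n)
  set lam1 := lam ⟨1, hn⟩ with hlam1def
  set σ := 1 - lam1 with hσdef
  have hσ : 0 < σ := by rw [hσdef]; linarith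
  -- eigenvalue facts
  have heig : ∀ i, hW.eigenvalues i = lam (e.symm i) := fun i => by
    rw [hlam (e.symm i), e.apply_symm_apply]
  have hlamle : ∀ j : Fin n, lam j ≤ 1 := fun j => by
    rw [← hlam1]
    exact hanti (by simp [Fin.le_def])
  have habs : ∀ i, |hW.eigenvalues i| ≤ 1 := fun i => by
    rw [heig i]
    exact abs_le.2 ⟨by linarith [hlow (e.symm i)], hlamle _⟩
  set i0 : Fin n := e ⟨0, by omega⟩ with hi0def
  have hi0 : hW.eigenvalues i0 = 1 := by
    rw [heig, hi0def, e.symm_apply_apply, hlam1]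
  have hother : ∀ i, i ≠ i0 → hW.eigenvalues i ≤ lam1 := by
    intro i hi
    rw [heig]
    refine hanti ?_
    have hne : e.symm i ≠ ⟨0, by omega⟩ := fun hc => hi (by rw [hi0def, ← hc, e.apply_symm_apply])
    have hv : 1 ≤ (e.symm i).val := by
      rcases Nat.eq_zero_or_pos (e.symm i).val with h0 | h1
      · exact absurd (Fin.val_injective (by simpa using h0)) hne
      · exact h1
    exact Fin.mk_le_mk.2 hv
  have hones : W.mulVec (fun _ => (1:ℝ)) = (fun _ => 1) := by
    funext i
    simp [Matrix.mulVec, dotProduct]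
    exact hW1 i
  have hsymm : ∀ i j, W i j = W j i := fun i j => by
    simpa using congrFun (congrFun hW.eq j) i
  have hcol : ∀ j, ∑ i, W i j = 1 := fun j => by
    rw [Finset.sum_congr rfl fun i _ => hsymm i j]
    exact hW1 j
  have hsum_eq : ∀ (F : Fin n → EuclideanSpace ℝ (Fin d)), ∑ i, ∑ j, W i j • F j = ∑ j, F j := by
    intro F
    rw [Finset.sum_comm]
    exact Finset.sum_congr rfl fun j _ => by rw [← Finset.sum_smul, hcol j, one_smul]
  have hG0 : ∑ j, g j (XL j) = 0 := by
    have h0 : (0 : EuclideanSpace ℝ (Fin d)) = (-γ) • ∑ j, g j (XL j) := by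
      calc (0 : EuclideanSpace ℝ (Fin d)) = ∑ i, XL i - ∑ i, ∑ j, W i j • XL j := by
            rw [hsum_eq XL, sub_self]
        _ = ∑ i, (XL i - ∑ j, W i j • XL j) := (Finset.sum_sub_distrib _ _).symm
        _ = ∑ i, ((-γ) • ∑ j, W i j • g j (XL j)) := Finset.sum_congr rfl fun i _ => hfix i
        _ = (-γ) • ∑ i, ∑ j, W i j • g j (XL j) := (Finset.smul_sum).symm
        _ = (-γ) • ∑ j, g j (XL j) := by rw [hsum_eq]
    rcases smul_eq_zero.1 h0.symm with h | h
    · exact absurd h (by intro hc; rw [neg_eq_zero] at hc; linarith)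
    · exact h
  -- Step 2 : sum of gradients at xstar vanishes
  have hGstar : ∑ i, g i xstar = 0 := by
    have hFder : HasFDerivAt (fun x => ∑ i, fi i x)
        (∑ i, (InnerProductSpace.toDual ℝ (EuclideanSpace ℝ (Fin d))) (g i xstar)) xstar :=
      HasFDerivAt.fun_sum fun i _ => (hgrad i xstar).hasFDerivAt
    have hmin : IsLocalMin (fun x => ∑ i, fi i x) xstar := by
      refine Filter.Eventually.of_forall fun x => ?_
      have h := hxstar x
      have hinv : (0:ℝ) < (n:ℝ)⁻¹ := by positivity
      exact le_of_mul_le_mul_left (by simpa using h) hinv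
    have hz := hmin.hasFDerivAt_eq_zero hFder
    have h2 : (InnerProductSpace.toDual ℝ (EuclideanSpace ℝ (Fin d))) (∑ i, g i xstar) = 0 := by
      rw [map_sum]; exact hz
    exact (InnerProductSpace.toDual ℝ (EuclideanSpace ℝ (Fin d))).map_eq_zero_iff.1 h2
  -- averages and scalar quantities
  set xbar : EuclideanSpace ℝ (Fin d) := (n:ℝ)⁻¹ • ∑ i, XL i with hxbar
  set C2 := ∑ i, ‖XL i - xbar‖^2 with hC2def
  set D2 := ∑ i, ‖XL i - xstar‖^2 with hD2def
  set B2 := ∑ i, ‖g i xstar‖^2 with hB2def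
  set G2 := ∑ i, ‖g i (XL i)‖^2 with hG2def
  have hC20 : 0 ≤ C2 := Finset.sum_nonneg fun i _ => sq_nonneg _
  have hD20 : 0 ≤ D2 := Finset.sum_nonneg fun i _ => sq_nonneg _
  have hB20 : 0 ≤ B2 := Finset.sum_nonneg fun i _ => sq_nonneg _
  have hG20 : 0 ≤ G2 := Finset.sum_nonneg fun i _ => sq_nonneg _
  set C := Real.sqrt C2 with hCdef
  set D := Real.sqrt D2 with hDdef
  set Bb := Real.sqrt B2 with hBbdef
  set Gn := Real.sqrt G2 with hGndef
  have hC0 : 0 ≤ C := Real.sqrt_nonneg _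
  have hD0 : 0 ≤ D := Real.sqrt_nonneg _
  have hBb0 : 0 ≤ Bb := Real.sqrt_nonneg _
  have hGn0 : 0 ≤ Gn := Real.sqrt_nonneg _
  have hCsq : C^2 = C2 := Real.sq_sqrt hC20
  have hDsq : D^2 = D2 := Real.sq_sqrt hD20
  have hBsq : Bb^2 = B2 := Real.sq_sqrt hB20
  have hGnsq : Gn^2 = G2 := Real.sq_sqrt hG20
  set E := ‖xbar - xstar‖ with hEdef
  have hE0 : 0 ≤ E := norm_nonneg _
  set sqn := Real.sqrt n with hsqndef
  have hsqn0 : 0 < sqn := Real.sqrt_pos.2 hn0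
  have hsqnsq : sqn^2 = (n:ℝ) := Real.sq_sqrt hn0.le
  -- columns
  set u : Fin d → EuclideanSpace ℝ (Fin n) := fun k => WithLp.toLp 2 (fun i => XL i k - xbar k) with hu
  set Gv : Fin d → EuclideanSpace ℝ (Fin n) := fun k => WithLp.toLp 2 (fun j => g j (XL j) k) with hGv
  have key : ∀ k, σ^2 * ‖u k‖^2 ≤ γ^2 * ‖Gv k‖^2 := by
    intro k
    set v : EuclideanSpace ℝ (Fin n) := u k with hv
    set wv : EuclideanSpace ℝ (Fin n) := WithLp.toLp 2 (W.mulVec v) with hwv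
    set wg : EuclideanSpace ℝ (Fin n) := WithLp.toLp 2 (W.mulVec (Gv k)) with hwg
    have hfixk : v - wv = (-γ) • wg := by
      ext i
      have hvi : v i = XL i k - xbar k := rfl
      have hwvi : wv i = (∑ j, W i j • XL j) k - xbar k := by
        have h1 : wv i = ∑ j, W i j * (XL j k - xbar k) := by
          rw [hwv]; simp [Matrix.mulVec, dotProduct, hv, hu]
        rw [h1, pilp_sum_apply]
        have h2 : ∀ j, W i j * (XL j k - xbar k)
            = (W i j • XL j) k - W i j * xbar k := by
          intro j; simp [PiLp.smul_apply]; ring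
        rw [Finset.sum_congr rfl fun j _ => h2 j, Finset.sum_sub_distrib,
          ← Finset.sum_mul, hW1 i, one_mul]
      have hwgi : wg i = (∑ j, W i j • g j (XL j)) k := by
        have h1 : wg i = ∑ j, W i j * g j (XL j) k := by
          rw [hwg]; simp [Matrix.mulVec, dotProduct, hGv]
        rw [h1, pilp_sum_apply]
        exact Finset.sum_congr rfl fun j _ => by simp [PiLp.smul_apply]
      have hco : (XL i - ∑ j, W i j • XL j) k = ((-γ) • ∑ j, W i j • g j (XL j)) k := by
        rw [hfix i]
      rw [PiLp.sub_apply, PiLp.smul_apply, smul_eq_mul] at hco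
      have hL : (v - wv) i = v i - wv i := rfl
      have hR : ((-γ) • wg) i = -γ * wg i := rfl
      rw [hL, hR, hvi, hwvi, hwgi]
      linarith [hco]
    have hv0 : ∑ i, v i = 0 := by
      have h1 : ∑ i, v i = (∑ i, XL i k) - (n:ℝ) * xbar k := by
        have : ∀ i : Fin n, v i = XL i k - xbar k := fun i => rfl
        rw [Finset.sum_congr rfl fun i _ => this i, Finset.sum_sub_distrib,
          Finset.sum_const, Finset.card_univ]
        simp [nsmul_eq_mul, pilp_sum_apply]
      have h2 : xbar k = (n:ℝ)⁻¹ * (∑ i, XL i) k := rfl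
      rw [h1, h2, pilp_sum_apply]
      field_simp
      ring
    have hquad := spec_quad hW (by omega) i0 hi0 lam1 hgap hother hones v wv hwv hv0
    have hlow2 : σ * ‖v‖^2 ≤ ⟪v, v - wv⟫ := by
      rw [inner_sub_right, real_inner_self_eq_norm_sq]
      have hσe : σ * ‖v‖^2 = ‖v‖^2 - lam1 * ‖v‖^2 := by rw [hσdef]; ring
      linarith [hquad, hσe]
    have hinner : ⟪v, v - wv⟫ ≤ γ * (‖v‖ * ‖Gv k‖) := by
      rw [hfixk, real_inner_smul_right]
      have h1 : |⟪v, wg⟫| ≤ ‖v‖ * ‖wg‖ := abs_real_inner_le_norm v wg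
      have h2 : ‖wg‖ ≤ ‖Gv k‖ := spec_norm_le hW habs (Gv k) wg hwg
      have h3 : -⟪v, wg⟫ ≤ ‖v‖ * ‖Gv k‖ := by
        have h4 := (abs_le.1 h1).1
        have h5 : ‖v‖ * ‖wg‖ ≤ ‖v‖ * ‖Gv k‖ :=
          mul_le_mul_of_nonneg_left h2 (norm_nonneg v)
        linarith
      have h6 := mul_le_mul_of_nonneg_left h3 hγ0.le
      have h7 : γ * -⟪v, wg⟫ = -γ * ⟪v, wg⟫ := by ring
      linarith
    have hvv : σ * ‖v‖^2 ≤ γ * (‖v‖ * ‖Gv k‖) := le_trans hlow2 hinner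
    rcases eq_or_lt_of_le (norm_nonneg v) with h0 | h0
    · rw [← h0]
      have : σ^2 * (0:ℝ)^2 = 0 := by ring
      rw [this]
      exact mul_nonneg (sq_nonneg γ) (sq_nonneg _)
    · have hdiv : σ * ‖v‖ ≤ γ * ‖Gv k‖ := by
        have h5 : (σ * ‖v‖) * ‖v‖ ≤ (γ * ‖Gv k‖) * ‖v‖ := by
          have e1 : (σ * ‖v‖) * ‖v‖ = σ * ‖v‖^2 := by ring
          have e2 : (γ * ‖Gv k‖) * ‖v‖ = γ * (‖v‖ * ‖Gv k‖) := by ring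
          rw [e1, e2]; exact hvv
        exact le_of_mul_le_mul_right h5 h0
      have h6 := mul_self_le_mul_self (mul_nonneg hσ.le (norm_nonneg v)) hdiv
      have e3 : (σ * ‖v‖) * (σ * ‖v‖) = σ^2 * ‖v‖^2 := by ring
      have e4 : (γ * ‖Gv k‖) * (γ * ‖Gv k‖) = γ^2 * ‖Gv k‖^2 := by ring
      rw [e3, e4] at h6
      exact h6
  -- sum over coordinates
  have hCsum : C2 = ∑ k, ‖u k‖^2 := by
    rw [hC2def]
    have h1 : ∀ i, ‖XL i - xbar‖^2 = ∑ k, (XL i k - xbar k)^2 := fun i => by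
      rw [eucl_norm_sq]
      exact Finset.sum_congr rfl fun k _ => by rw [PiLp.sub_apply]
    rw [Finset.sum_congr rfl fun i _ => h1 i, Finset.sum_comm]
    exact Finset.sum_congr rfl fun k _ => (eucl_norm_sq (u k)).symm
  have hGsum : G2 = ∑ k, ‖Gv k‖^2 := by
    rw [hG2def]
    have h1 : ∀ j, ‖g j (XL j)‖^2 = ∑ k, (g j (XL j) k)^2 := fun j => eucl_norm_sq _
    rw [Finset.sum_congr rfl fun j _ => h1 j, Finset.sum_comm]
    exact Finset.sum_congr rfl fun k _ => (eucl_norm_sq (Gv k)).symm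
  have hconssq : σ^2 * C2 ≤ γ^2 * G2 := by
    rw [hCsum, hGsum, Finset.mul_sum, Finset.mul_sum]
    exact Finset.sum_le_sum fun k _ => key k
  have hcons : σ * C ≤ γ * Gn := by
    have h1 : (σ*C)^2 ≤ (γ*Gn)^2 := by
      rw [mul_pow, mul_pow, hCsq, hGnsq]; exact hconssq
    exact le_of_pow_le_pow_left₀ two_ne_zero (mul_nonneg hγ0.le hGn0) h1
  -- strong convexity at the average
  have hEb : μ * (sqn * E) ≤ L * C := by
    have hsum1 : (n:ℝ) * (μ * E^2) ≤ ∑ i, ⟪g i xbar - g i xstar, xbar - xstar⟫ := by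
      have h1 : (n:ℝ) * (μ * E^2) = ∑ _i : Fin n, μ * E^2 := by
        rw [Finset.sum_const, Finset.card_univ]; simp [nsmul_eq_mul]
      rw [h1]
      exact Finset.sum_le_sum fun i _ => hsc i xbar xstar
    have hsum2 : ∑ i, ⟪g i xbar - g i xstar, xbar - xstar⟫
        = ⟪∑ i, (g i xbar - g i (XL i)), xbar - xstar⟫ := by
      have hsp : ∑ i, (g i xbar - g i xstar) = ∑ i, (g i xbar - g i (XL i)) := by
        rw [Finset.sum_sub_distrib, Finset.sum_sub_distrib, hGstar, hG0, sub_zero]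
      rw [← sum_inner, hsp]
    have hsum3 : ⟪∑ i, (g i xbar - g i (XL i)), xbar - xstar⟫
        ≤ (∑ i, L * ‖xbar - XL i‖) * E := by
      calc ⟪∑ i, (g i xbar - g i (XL i)), xbar - xstar⟫
          ≤ ‖∑ i, (g i xbar - g i (XL i))‖ * E := real_inner_le_norm _ _
        _ ≤ (∑ i, ‖g i xbar - g i (XL i)‖) * E :=
            mul_le_mul_of_nonneg_right (norm_sum_le _ _) hE0
        _ ≤ (∑ i, L * ‖xbar - XL i‖) * E :=
            mul_le_mul_of_nonneg_right
              (Finset.sum_le_sum fun i _ => hsmooth i xbar (XL i)) hE0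
    have hCS : ∑ i, ‖xbar - XL i‖ ≤ sqn * C := by
      have h2 : ∑ i, ‖xbar - XL i‖^2 = C2 := by
        rw [hC2def]; exact Finset.sum_congr rfl fun i _ => by rw [norm_sub_rev]
      have h3 : (∑ i, ‖xbar - XL i‖)^2 ≤ (n:ℝ) * C2 := by
        rw [← h2]
        simpa using sq_sum_le_card_mul_sum_sq (s := (univ : Finset (Fin n)))
          (f := fun i => ‖xbar - XL i‖)
      have h5 : ((sqn*C))^2 = (n:ℝ) * C2 := by rw [mul_pow, hsqnsq, hCsq]
      refine le_of_pow_le_pow_left₀ two_ne_zero (mul_nonneg hsqn0.le hC0) ?_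
      rw [h5]; exact h3
    have hfin : (n:ℝ) * (μ * E^2) ≤ L * (sqn * C) * E := by
      have h7 : (∑ i, L * ‖xbar - XL i‖) * E ≤ L * (sqn * C) * E := by
        have h8 : ∑ i, L * ‖xbar - XL i‖ ≤ L * (sqn * C) := by
          rw [← Finset.mul_sum]
          exact mul_le_mul_of_nonneg_left hCS hL.le
        exact mul_le_mul_of_nonneg_right h8 hE0
      calc (n:ℝ) * (μ * E^2) ≤ ∑ i, ⟪g i xbar - g i xstar, xbar - xstar⟫ := hsum1
        _ = ⟪∑ i, (g i xbar - g i (XL i)), xbar - xstar⟫ := hsum2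
        _ ≤ (∑ i, L * ‖xbar - XL i‖) * E := hsum3
        _ ≤ L * (sqn * C) * E := h7
    rcases eq_or_lt_of_le hE0 with h0 | h0
    · rw [← h0]
      have h9 : μ * (sqn * 0) = 0 := by ring
      rw [h9]
      exact mul_nonneg hL.le hC0
    · have h6 : μ * (sqn*E) * (sqn*E) ≤ L*C*(sqn*E) := by
        have h10 : μ*(sqn*E)*(sqn*E) = sqn^2 * (μ*E^2) := by ring
        rw [h10, hsqnsq]
        calc (n:ℝ)*(μ*E^2) ≤ L*(sqn*C)*E := hfin
          _ = L*C*(sqn*E) := by ring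
      exact le_of_mul_le_mul_right h6 (mul_pos hsqn0 h0)
  -- Pythagoras-type bound D ≤ C + sqn E
  have hD : D ≤ C + sqn * E := by
    have h1 : ∀ i, ‖XL i - xstar‖ ≤ ‖XL i - xbar‖ + E := fun i => by
      have hdec : XL i - xstar = (XL i - xbar) + (xbar - xstar) := by abel
      rw [hdec]
      exact norm_add_le _ _
    have h2 : D2 ≤ ∑ i, (‖XL i - xbar‖ + E)^2 := by
      rw [hD2def]
      exact Finset.sum_le_sum fun i _ => pow_le_pow_left₀ (norm_nonneg _) (h1 i) 2
    have h3 := l2_triangle (fun i => ‖XL i - xbar‖) (fun _ => E)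
      (fun i => norm_nonneg _) (fun _ => hE0)
    have h4 : Real.sqrt (∑ _i : Fin n, E^2) = sqn * E := by
      rw [Finset.sum_const, Finset.card_univ]
      simp only [Fintype.card_fin, nsmul_eq_mul]
      rw [Real.sqrt_mul (by positivity), Real.sqrt_sq hE0]
    calc D ≤ Real.sqrt (∑ i, (‖XL i - xbar‖ + E)^2) := by
          rw [hDdef]; exact Real.sqrt_le_sqrt h2
      _ ≤ Real.sqrt (∑ i, ‖XL i - xbar‖^2) + Real.sqrt (∑ _i : Fin n, E^2) := h3
      _ = C + sqn * E := by rw [h4, ← hC2def]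
  -- bound on Gn
  have hGnb : Gn ≤ L * D + Bb := by
    have h1 : ∀ i, ‖g i (XL i)‖ ≤ L*‖XL i - xstar‖ + ‖g i xstar‖ := fun i => by
      have hdec : g i (XL i) = (g i (XL i) - g i xstar) + g i xstar := by abel
      calc ‖g i (XL i)‖ = ‖(g i (XL i) - g i xstar) + g i xstar‖ := by rw [← hdec]
        _ ≤ ‖g i (XL i) - g i xstar‖ + ‖g i xstar‖ := norm_add_le _ _
        _ ≤ L*‖XL i - xstar‖ + ‖g i xstar‖ := by linarith [hsmooth i (XL i) xstar]
    have h2 : G2 ≤ ∑ i, (L*‖XL i - xstar‖ + ‖g i xstar‖)^2 := by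
      rw [hG2def]
      exact Finset.sum_le_sum fun i _ => pow_le_pow_left₀ (norm_nonneg _) (h1 i) 2
    have h3 := l2_triangle (fun i => L*‖XL i - xstar‖) (fun i => ‖g i xstar‖)
      (fun i => mul_nonneg hL.le (norm_nonneg _)) (fun i => norm_nonneg _)
    have h4 : Real.sqrt (∑ i, (L*‖XL i - xstar‖)^2) = L * D := by
      have h5 : ∑ i, (L*‖XL i - xstar‖)^2 = L^2 * D2 := by
        rw [hD2def, Finset.mul_sum]
        exact Finset.sum_congr rfl fun i _ => by ring
      rw [h5, Real.sqrt_mul (by positivity), Real.sqrt_sq hL.le, hDdef]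
    calc Gn ≤ Real.sqrt (∑ i, (L*‖XL i - xstar‖ + ‖g i xstar‖)^2) := by
          rw [hGndef]; exact Real.sqrt_le_sqrt h2
      _ ≤ Real.sqrt (∑ i, (L*‖XL i - xstar‖)^2) + Real.sqrt (∑ i, ‖g i xstar‖^2) := h3
      _ = L*D + Bb := by rw [h4, ← hB2def]
  -- spectral gap vs rho
  have habs1 : |lam1| < 1 := abs_lt.2 ⟨hlow _, hgap⟩
  have hlamn : lam ⟨n-1, by omega⟩ ≤ lam1 := hanti (Fin.mk_le_mk.2 (by omega))
  have habs2 : |lam ⟨n-1, by omega⟩| < 1 := abs_lt.2 ⟨hlow _, lt_of_le_of_lt hlamn hgap⟩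
  have ht0 : 0 < 1 - ρ := by
    rw [hρ]
    have := max_lt habs1 habs2
    linarith
  have htσ : 1 - ρ ≤ σ := by
    rw [hσdef, hρ]
    have h1 : lam1 ≤ |lam1| := le_abs_self _
    have h2 : |lam1| ≤ max |lam1| |lam ⟨n-1, by omega⟩| := le_max_left _ _
    linarith
  -- final algebra
  have h6L : 6*L^2*γ ≤ μ*σ := by
    have := (le_div_iff₀ (by positivity : (0:ℝ) < 6*L^2)).1 hγ
    linarith
  have hgoal2 : D2 * (μ^2 * (1-ρ)^2) ≤ 4*(μ+2*L)^2*γ^2*B2 := by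
    have hmain := final_algebra L μ γ σ (1-ρ) C D E sqn Bb Gn hL hμ hμL hγ0 hσ
      hC0 hD0 hBb0 hGn0 hE0 hsqn0 ht0 htσ h6L hcons hGnb hEb hD
    rw [hDsq, hBsq] at hmain
    exact hmain
  have hμne : (μ:ℝ) ≠ 0 := ne_of_gt hμ
  have hnne : (n:ℝ) ≠ 0 := ne_of_gt hn0
  have htne : (1-ρ) ≠ 0 := ne_of_gt ht0
  have hRHS : 4 * (n:ℝ) * (1 + 2 * L / μ) ^ 2 * γ ^ 2 * ((n : ℝ)⁻¹ * B2) / (1 - ρ) ^ 2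
      = 4*(μ+2*L)^2*γ^2*B2/(μ^2*(1-ρ)^2) := by
    field_simp
  rw [hRHS, le_div_iff₀ (by positivity : (0:ℝ) < μ^2*(1-ρ)^2)]
  exact hgoal2
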